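/- Let V be an m-dimensional subspace of ℝⁿ, 0 < α < 1, P a (V, α)-planar subset of ℝⁿ, δ > 0, and r > 0. Then for any x ∈ ℝⁿ there is a constant C = C(α, n, m) depending only on α, n, m such that the set P(δr) ∩ B(x, r) can be covered by at most C·δ^{−m} balls of radius δr, provided 0 < δ < 1. -/

import Mathlib

open Metric Set Filter
open scoped RealInnerProductSpace

noncomputable def projV {n : ℕ} (V : Submodule ℝ (EuclideanSpace ℝ (Fin n)))
    (x : EuclideanSpace ℝ (Fin n)) : EuclideanSpace ℝ (Fin n) :=
  (V.orthogonalProjectionOnto x : EuclideanSpace ℝ (Fin n))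

/-- `A` is `(V, α)`-planar: `A ⊆ X(x, V, α)` for every `x ∈ A`. -/
def IsPlanar {n : ℕ} (V : Submodule ℝ (EuclideanSpace ℝ (Fin n))) (α : ℝ)
    (A : Set (EuclideanSpace ℝ (Fin n))) : Prop :=
  ∀ x ∈ A, ∀ y ∈ A, ‖projV Vᗮ (y - x)‖ ≤ α * ‖y - x‖

/-- The open half-space `H(x, θ) = {y : (y - x)·θ > 0}`. -/
def HS {n : ℕ} (x θ : EuclideanSpace ℝ (Fin n)) : Set (EuclideanSpace ℝ (Fin n)) :=
  {y | 0 < ⟪y - x, θ⟫}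

open MeasureTheory in
open scoped ENNReal in
private lemma pack {d : ℕ} {s R : ℝ} (hs : 0 < s) (hR : 0 ≤ R) (x : EuclideanSpace ℝ (Fin d))
    (T : Finset (EuclideanSpace ℝ (Fin d))) (hT : ∀ t ∈ T, t ∈ closedBall x R)
    (hsep : (T : Set (EuclideanSpace ℝ (Fin d))).Pairwise fun a b => s ≤ dist a b) :
    (T.card : ℝ) ≤ (3 * R / s + 1) ^ d := by
  set μ : Measure (EuclideanSpace ℝ (Fin d)) := volume
  have hB0 : 0 < μ (ball 0 1) := measure_ball_pos μ 0 one_pos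
  have hBt : μ (ball 0 1) < ⊤ :=
    lt_of_le_of_lt (measure_mono ball_subset_closedBall) measure_closedBall_lt_top
  have hdisj : (T : Set (EuclideanSpace ℝ (Fin d))).PairwiseDisjoint
      (fun t => closedBall t (s / 3)) := by
    intro a ha b hb hab
    exact closedBall_disjoint_closedBall (by linarith [hsep ha hb hab])
  have hmeas := measure_biUnion_finset (μ := μ) hdisj (fun t _ => measurableSet_closedBall (x := t))
  have hsub : (⋃ t ∈ T, closedBall t (s / 3)) ⊆ closedBall x (R + s / 3) := by
    intro y hy
    simp only [mem_iUnion] at hy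
    obtain ⟨t, ht, hyt⟩ := hy
    have h1 := hT t ht
    simp only [mem_closedBall] at *
    calc dist y x ≤ dist y t + dist t x := dist_triangle _ _ _
      _ ≤ R + s / 3 := by linarith
  have hle : (T.card : ℝ≥0∞) * (ENNReal.ofReal ((s / 3) ^ d) * μ (ball 0 1)) ≤
      ENNReal.ofReal ((R + s / 3) ^ d) * μ (ball 0 1) := by
    calc (T.card : ℝ≥0∞) * (ENNReal.ofReal ((s / 3) ^ d) * μ (ball 0 1))
        = ∑ t ∈ T, μ (closedBall t (s / 3)) := by
          rw [Finset.sum_congr rfl (fun t _ => by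
            rw [Measure.addHaar_closedBall μ t (by positivity), finrank_euclideanSpace_fin])]
          simp [Finset.sum_const, nsmul_eq_mul]
      _ = μ (⋃ t ∈ T, closedBall t (s / 3)) := hmeas.symm
      _ ≤ μ (closedBall x (R + s / 3)) := measure_mono hsub
      _ = ENNReal.ofReal ((R + s / 3) ^ d) * μ (ball 0 1) := by
          rw [Measure.addHaar_closedBall μ x (by positivity), finrank_euclideanSpace_fin]
  rw [← mul_assoc] at hle
  have hle2 : (T.card : ℝ≥0∞) * ENNReal.ofReal ((s / 3) ^ d) ≤
      ENNReal.ofReal ((R + s / 3) ^ d) :=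
    (ENNReal.mul_le_mul_iff_left hB0.ne' hBt.ne).mp hle
  have hle3 : (T.card : ℝ) * (s / 3) ^ d ≤ (R + s / 3) ^ d := by
    have h1 : ((T.card : ℝ≥0∞)) = ENNReal.ofReal (T.card : ℝ) := by
      simp [ENNReal.ofReal_natCast]
    rw [h1, ← ENNReal.ofReal_mul (by positivity)] at hle2
    exact (ENNReal.ofReal_le_ofReal_iff (by positivity)).mp hle2
  have hs3 : (0:ℝ) < (s / 3) ^ d := by positivity
  have : (T.card : ℝ) ≤ (R + s / 3) ^ d / (s / 3) ^ d := by
    rw [le_div_iff₀ hs3]; exact hle3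
  calc (T.card : ℝ) ≤ (R + s / 3) ^ d / (s / 3) ^ d := this
    _ = ((R + s / 3) / (s / 3)) ^ d := (div_pow _ _ _).symm
    _ = (3 * R / s + 1) ^ d := by
        congr 1
        field_simp

open MeasureTheory in
open scoped ENNReal in
private lemma net {d : ℕ} {s R : ℝ} (hs : 0 < s) (hR : 0 ≤ R) (x : EuclideanSpace ℝ (Fin d))
    (A : Set (EuclideanSpace ℝ (Fin d))) (hA : A ⊆ closedBall x R) :
    ∃ T : Finset (EuclideanSpace ℝ (Fin d)), ↑T ⊆ A ∧ (T.card : ℝ) ≤ (3 * R / s + 1) ^ d ∧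
      A ⊆ ⋃ t ∈ T, closedBall t s := by
  classical
  set F : Finset (EuclideanSpace ℝ (Fin d)) → Prop := fun T =>
    ↑T ⊆ A ∧ (T : Set (EuclideanSpace ℝ (Fin d))).Pairwise fun a b => s ≤ dist a b with hF
  have hcard : ∀ T, F T → (T.card : ℝ) ≤ (3 * R / s + 1) ^ d := fun T hT =>
    pack hs hR x T (fun t ht => hA (hT.1 ht)) hT.2
  set K : Set ℕ := {k | ∃ T, F T ∧ T.card = k} with hK
  have hK0 : 0 ∈ K := ⟨∅, ⟨by simp, by simp⟩, rfl⟩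
  have hbdd : BddAbove K := by
    refine ⟨⌊(3 * R / s + 1) ^ d⌋₊, fun k hk => ?_⟩
    obtain ⟨T, hT, rfl⟩ := hk
    exact Nat.le_floor (hcard T hT)
  obtain ⟨T, hT, hTcard⟩ := Nat.sSup_mem ⟨0, hK0⟩ hbdd
  refine ⟨T, hT.1, hTcard ▸ hcard T hT, ?_⟩
  intro a ha
  by_contra hcov
  simp only [mem_iUnion, mem_closedBall, not_exists, not_le] at hcov
  have haT : a ∉ T := fun h => absurd (hcov a h) (by simp [hs.not_gt])
  have hins : F (insert a T) := by
    refine ⟨by simp [Set.insert_subset_iff, ha, hT.1], ?_⟩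
    rw [Finset.coe_insert]
    haveI : Std.Symm (fun a b : EuclideanSpace ℝ (Fin d) => s ≤ dist a b) := ⟨fun u v h => by rwa [dist_comm]⟩
    refine hT.2.insert_of_symm ?_
    intro b hb hba
    exact (hcov b hb).le.trans (by rw [dist_comm])
  have : sSup K + 1 ∈ K := ⟨insert a T, hins, by rw [Finset.card_insert_of_notMem haT, hTcard]⟩
  exact absurd (le_csSup hbdd this) (by omega)

set_option maxHeartbeats 2000000 in
/-- Covering estimate: the `(δr)`-neighbourhood of an `(m, α)`-planar set intersected
with a ball of radius `r` is covered by at most `C(α, n, m)·δ^{-m}` balls of radius `δr`. -/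
theorem stmt16 (n m : ℕ) (α : ℝ) (hα0 : 0 < α) (hα1 : α < 1) :
    ∃ C : ℝ, 0 < C ∧
      ∀ V : Submodule ℝ (EuclideanSpace ℝ (Fin n)), Module.finrank ℝ V = m →
        ∀ P : Set (EuclideanSpace ℝ (Fin n)), IsPlanar V α P →
          ∀ δ r : ℝ, 0 < δ → δ < 1 → 0 < r →
            ∀ x : EuclideanSpace ℝ (Fin n),
              ∃ S : Finset (EuclideanSpace ℝ (Fin n)),
                (S.card : ℝ) ≤ C / δ ^ m ∧
                cthickening (δ * r) P ∩ closedBall x r ⊆ ⋃ y ∈ S, closedBall y (δ * r) := by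
  classical
  have h1α : (0:ℝ) < 1 - α ^ 2 := by nlinarith
  obtain ⟨sq, hsqdef⟩ : ∃ t : ℝ, t = Real.sqrt (1 - α ^ 2) := ⟨_, rfl⟩
  have hsq : 0 < sq := hsqdef ▸ Real.sqrt_pos.mpr h1α
  have hsq1 : sq ≤ 1 := by
    rw [hsqdef]
    have h := Real.sqrt_le_sqrt (show (1:ℝ) - α ^ 2 ≤ 1 by nlinarith)
    simpa using h
  refine ⟨6 ^ n * (36 / sq + 1) ^ m,
    mul_pos (by positivity) (pow_pos (by positivity) m), ?_⟩
  intro V hV P hP δ r hδ0 hδ1 hr x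
  rcases P.eq_empty_or_nonempty with hPe | hPne
  · exact ⟨∅, by simp; positivity, by simp [hPe, cthickening_empty]⟩
  obtain ⟨β, hβdef⟩ : ∃ t : ℝ, t = sq / 4 := ⟨_, rfl⟩
  have hβ : 0 < β := by rw [hβdef]; positivity
  -- the isometry from V to E_m
  obtain ⟨eV, heV⟩ : ∃ t : V ≃ₗᵢ[ℝ] EuclideanSpace ℝ (Fin m),
    t = ((stdOrthonormalBasis ℝ V).reindex (finCongr hV)).repr := ⟨_, rfl⟩
  obtain ⟨f, hf⟩ : ∃ t : EuclideanSpace ℝ (Fin n) → EuclideanSpace ℝ (Fin m),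
    t = fun p => eV (V.orthogonalProjectionOnto p) := ⟨_, rfl⟩
  have hfdist : ∀ p q, dist (f p) (f q) = ‖projV V (p - q)‖ := by
    intro p q
    rw [hf]
    simp only [eV.dist_map]
    rw [dist_eq_norm, ← map_sub]
    rw [projV, map_sub]
    exact rfl
  have hpyth : ∀ w : EuclideanSpace ℝ (Fin n),
      ‖w‖ ^ 2 = ‖projV V w‖ ^ 2 + ‖projV Vᗮ w‖ ^ 2 := by
    intro w
    simpa [projV] using Submodule.norm_sq_eq_add_norm_sq_projection w V
  have hflip : ∀ p q, dist (f p) (f q) ≤ dist p q := by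
    intro p q
    rw [hfdist, dist_eq_norm]
    have h := hpyth (p - q)
    nlinarith [norm_nonneg (projV V (p - q)), norm_nonneg (p - q), norm_nonneg (projV Vᗮ (p - q))]
  have hPdist : ∀ p ∈ P, ∀ q ∈ P, sq * dist p q ≤ dist (f p) (f q) := by
    intro p hp q hq
    rw [hfdist, dist_eq_norm]
    have hplan := hP q hq p hp
    have h := hpyth (p - q)
    have h2 : (1 - α ^ 2) * ‖p - q‖ ^ 2 ≤ ‖projV V (p - q)‖ ^ 2 := by
      nlinarith [norm_nonneg (p - q), norm_nonneg (projV Vᗮ (p - q)),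
        mul_le_mul hplan hplan (norm_nonneg _) (by positivity)]
    have h3 : (sq * ‖p - q‖) ^ 2 ≤ ‖projV V (p - q)‖ ^ 2 := by
      rw [mul_pow, hsqdef, Real.sq_sqrt h1α.le]; exact h2
    nlinarith [h3, norm_nonneg (projV V (p - q)), norm_nonneg (p - q),
      mul_nonneg hsq.le (norm_nonneg (p - q))]
  obtain ⟨Q, hQ⟩ : ∃ t : Set (EuclideanSpace ℝ (Fin n)), t = P ∩ closedBall x (3 * r) := ⟨_, rfl⟩
  have hsβ : 0 < β * (δ * r) := by positivity
  have hAQ : f '' Q ⊆ closedBall (f x) (3 * r) := by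
    rintro _ ⟨p, hpQ, rfl⟩
    rw [hQ] at hpQ
    exact mem_closedBall.mpr (le_trans (hflip p x) (mem_closedBall.mp hpQ.2))
  obtain ⟨TV, hTVsub, hTVcard, hTVcov⟩ := net hsβ (by positivity) (f x) (f '' Q) hAQ
  obtain ⟨g, hg⟩ : ∃ u : EuclideanSpace ℝ (Fin m) → EuclideanSpace ℝ (Fin n),
    u = fun t => if h : ∃ p, p ∈ Q ∧ f p = t then h.choose else x := ⟨_, rfl⟩
  have hgspec : ∀ t ∈ TV, g t ∈ Q ∧ f (g t) = t := by
    intro t ht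
    obtain ⟨p, hp, hfp⟩ := hTVsub ht
    have hex : ∃ p, p ∈ Q ∧ f p = t := ⟨p, hp, hfp⟩
    rw [hg]; simp only [dif_pos hex]; exact hex.choose_spec
  clear hg heV hf
  obtain ⟨T', hT'⟩ : ∃ t : Finset (EuclideanSpace ℝ (Fin n)), t = TV.image g := ⟨_, rfl⟩
  have hsδ : 0 < δ * r := by positivity
  have hnets : ∀ y, ∃ N : Finset (EuclideanSpace ℝ (Fin n)),
      (N.card : ℝ) ≤ 6 ^ n ∧ closedBall y ((3/2) * (δ * r)) ⊆ ⋃ z ∈ N, closedBall z (δ * r) := by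
    intro y
    obtain ⟨N, _, hc, hcov⟩ := net hsδ (by positivity) y (closedBall y ((3/2) * (δ * r))) subset_rfl
    refine ⟨N, le_trans hc ?_, hcov⟩
    have heq : 3 * ((3/2) * (δ * r)) / (δ * r) + 1 = (11/2 : ℝ) := by
      field_simp
      ring
    rw [heq]
    exact pow_le_pow_left₀ (by norm_num) (by norm_num) n
  choose N hNcard hNcov using hnets
  refine ⟨T'.biUnion N, ?_, ?_⟩
  · have h1 : (T'.biUnion N).card ≤ ∑ t ∈ T', (N t).card := Finset.card_biUnion_le
    have h2 : ((T'.biUnion N).card : ℝ) ≤ (T'.card : ℝ) * 6 ^ n := by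
      calc ((T'.biUnion N).card : ℝ) ≤ ∑ t ∈ T', ((N t).card : ℝ) := by exact_mod_cast h1
        _ ≤ ∑ _t ∈ T', (6:ℝ) ^ n := Finset.sum_le_sum (fun t _ => hNcard t)
        _ = T'.card * 6 ^ n := by rw [Finset.sum_const, nsmul_eq_mul]
    have h3 : (T'.card : ℝ) ≤ (TV.card : ℝ) := by
      rw [hT']
      exact_mod_cast Finset.card_image_le
    have h4 : (TV.card : ℝ) ≤ (36 / sq + 1) ^ m / δ ^ m := by
      refine le_trans hTVcard ?_
      have heq : 3 * (3 * r) / (β * (δ * r)) + 1 = 36 / sq / δ + 1 := by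
        rw [hβdef]; field_simp; ring
      rw [heq]
      have ha0 : (0:ℝ) ≤ 36 / sq / δ + 1 := by positivity
      have hle : 36 / sq / δ + 1 ≤ (36 / sq + 1) / δ := by
        rw [add_div]
        have h1δ : (1:ℝ) ≤ 1 / δ := by rw [le_div_iff₀ hδ0]; linarith
        linarith
      calc (36 / sq / δ + 1) ^ m ≤ ((36 / sq + 1) / δ) ^ m := pow_le_pow_left₀ ha0 hle m
        _ = (36 / sq + 1) ^ m / δ ^ m := div_pow _ _ m
    calc ((T'.biUnion N).card : ℝ) ≤ (T'.card : ℝ) * 6 ^ n := h2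
      _ ≤ ((36 / sq + 1) ^ m / δ ^ m) * 6 ^ n :=
          mul_le_mul_of_nonneg_right (h3.trans h4) (by positivity)
      _ = 6 ^ n * (36 / sq + 1) ^ m / δ ^ m := by ring
  · rintro a ⟨haP, hax⟩
    have hinf : Metric.infDist a P ≤ δ * r :=
      ENNReal.toReal_le_of_le_ofReal (by positivity) (mem_cthickening_iff.mp haP)
    obtain ⟨p, hpP, hpa⟩ := (infDist_lt_iff hPne).mp
      (lt_of_le_of_lt hinf (by nlinarith : δ * r < (9/8) * (δ * r)))
    have hpQ : p ∈ Q := by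
      rw [hQ]
      refine ⟨hpP, mem_closedBall.mpr ?_⟩
      have h1 : dist p x ≤ dist p a + dist a x := dist_triangle _ _ _
      rw [dist_comm p a] at h1
      have h2 : dist a x ≤ r := mem_closedBall.mp hax
      have hδr : δ * r < r := by
        calc δ * r < 1 * r := mul_lt_mul_of_pos_right hδ1 hr
          _ = r := one_mul r
      linarith
    have hfp : f p ∈ f '' Q := ⟨p, hpQ, rfl⟩
    have hc := hTVcov hfp
    simp only [mem_iUnion, mem_closedBall] at hc
    obtain ⟨t, htTV, hdt⟩ := hc
    obtain ⟨hgtQ, hfgt⟩ := hgspec t htTV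
    have hdistp : dist p (g t) ≤ (1/4) * (δ * r) := by
      rw [hQ] at hgtQ
      have h := hPdist p hpP (g t) hgtQ.1
      rw [hfgt] at h
      rw [hβdef] at hdt
      have h5 : sq * dist p (g t) ≤ sq * ((1/4) * (δ * r)) := by
        calc sq * dist p (g t) ≤ sq / 4 * (δ * r) := le_trans h hdt
          _ = sq * ((1/4) * (δ * r)) := by ring
      exact (mul_le_mul_iff_right₀ hsq).mp h5
    have hat : a ∈ closedBall (g t) ((3/2) * (δ * r)) := by
      refine mem_closedBall.mpr ?_
      calc dist a (g t) ≤ dist a p + dist p (g t) := dist_triangle _ _ _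
        _ ≤ (3/2) * (δ * r) := by linarith only [hpa, hdistp, mul_pos hδ0 hr]
    have hcv := hNcov (g t) hat
    simp only [mem_iUnion] at hcv ⊢
    obtain ⟨z, hz, haz⟩ := hcv
    exact ⟨z, Finset.mem_biUnion.mpr ⟨g t, hT' ▸ Finset.mem_image_of_mem g htTV, hz⟩, haz⟩
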